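/- Every irreducible unitary representation of H = ℤ² ⋊ ℤ/4 on a nonzero finite-dimensional complex inner product space has dimension 1, 2, or 4. -/

import Mathlib

/-- The additive automorphism `(a, b) ↦ (-b, a)` of `ℤ²`, i.e. the matrix
`[[0, -1], [1, 0]]`. -/
def rotAdd : (ℤ × ℤ) ≃+ (ℤ × ℤ) where
  toFun p := (-p.2, p.1)
  invFun p := (p.2, -p.1)
  left_inv p := by simp
  right_inv p := by simp
  map_add' p q := by simp [Prod.ext_iff]; ring

/-- The automorphism `(a, b) ↦ (-b, a)` of `ℤ²`, written multiplicatively. -/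
def rotAut : MulAut (Multiplicative (ℤ × ℤ)) := AddEquiv.toMultiplicative rotAdd

lemma rotAut_pow_four : rotAut ^ 4 = 1 := by
  refine MulEquiv.ext fun x => ?_
  show rotAut (rotAut (rotAut (rotAut x))) = x
  simp [rotAut, rotAdd, AddEquiv.toMultiplicative]

/-- The action of `ℤ/4` on `ℤ²` in which a fixed generator acts by the matrix
`[[0, -1], [1, 0]]`. -/
def rotAction : Multiplicative (ZMod 4) →* MulAut (Multiplicative (ℤ × ℤ)) where
  toFun ε := rotAut ^ (ε.toAdd.val)
  map_one' := by
    show rotAut ^ (0 : ZMod 4).val = 1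
    simp
  map_mul' x y := by
    show rotAut ^ (x.toAdd + y.toAdd).val = _
    rw [ZMod.val_add, ← pow_eq_pow_mod _ rotAut_pow_four, pow_add]

/-- The group `H = ℤ² ⋊ ℤ/4`, with a generator of `ℤ/4` acting on `ℤ²` by the
matrix `[[0, -1], [1, 0]]`. -/
def Hgroup : Type :=
  SemidirectProduct (Multiplicative (ℤ × ℤ)) (Multiplicative (ZMod 4)) rotAction

instance : Group Hgroup := inferInstanceAs (Group (SemidirectProduct _ _ _))
namespace HgrpAux

open SemidirectProduct Multiplicative

def sgen : Hgroup := inr (ofAdd (1 : ZMod 4))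
def n1 : Hgroup := inl (ofAdd ((1, 0) : ℤ × ℤ))
def n2 : Hgroup := inl (ofAdd ((0, 1) : ℤ × ℤ))

lemma rotAction_ofAdd_one : rotAction (ofAdd (1 : ZMod 4)) = rotAut := by
  show rotAut ^ (Multiplicative.toAdd (ofAdd (1 : ZMod 4))).val = rotAut
  rw [toAdd_ofAdd, show (1 : ZMod 4).val = 1 from rfl, pow_one]

lemma sn1 : sgen * n1 = n2 * sgen := by
  have h := SemidirectProduct.inl_aut (φ := rotAction) (ofAdd (1 : ZMod 4))
    (ofAdd ((1, 0) : ℤ × ℤ))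
  rw [rotAction_ofAdd_one] at h
  have h2 : rotAut (ofAdd ((1, 0) : ℤ × ℤ)) = ofAdd ((0, 1) : ℤ × ℤ) := by
    simp [rotAut, rotAdd, AddEquiv.toMultiplicative]
  rw [h2] at h
  have : (inl (ofAdd ((0,1) : ℤ × ℤ)) : Hgroup) = sgen * n1 * sgen⁻¹ := h
  rw [show (inl (ofAdd ((0,1) : ℤ × ℤ)) : Hgroup) = n2 from rfl] at this
  rw [this]
  simp [mul_assoc]

lemma sn2 : sgen * n2 = n1⁻¹ * sgen := by
  have h := SemidirectProduct.inl_aut (φ := rotAction) (ofAdd (1 : ZMod 4))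
    (ofAdd ((0, 1) : ℤ × ℤ))
  rw [rotAction_ofAdd_one] at h
  have h2 : rotAut (ofAdd ((0, 1) : ℤ × ℤ)) = (ofAdd ((1, 0) : ℤ × ℤ))⁻¹ := by
    simp [rotAut, rotAdd, AddEquiv.toMultiplicative]
    rfl
  rw [h2, map_inv] at h
  have : (n1⁻¹ : Hgroup) = sgen * n2 * sgen⁻¹ := h
  rw [this]
  simp [mul_assoc]

lemma n1s : n1 * sgen = sgen * n2⁻¹ := by
  have h : n1 * (sgen * n2) * n2⁻¹ = n1 * (n1⁻¹ * sgen) * n2⁻¹ := by rw [sn2]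
  simpa [mul_assoc] using h

lemma n2s : n2 * sgen = sgen * n1 := sn1.symm

lemma inl_mul (x y : Multiplicative (ℤ × ℤ)) :
    (inl x : Hgroup) * inl y = inl (x * y) :=
  (map_mul SemidirectProduct.inl x y).symm

lemma n1n2 : n1 * n2 = n2 * n1 := by
  show (inl (ofAdd ((1,0) : ℤ×ℤ)) : Hgroup) * inl (ofAdd ((0,1) : ℤ×ℤ))
      = inl (ofAdd ((0,1) : ℤ×ℤ)) * inl (ofAdd ((1,0) : ℤ×ℤ))
  exact (inl_mul _ _).trans (by rw [mul_comm]; exact (inl_mul _ _).symm)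

lemma s4 : sgen ^ 4 = 1 := by
  show (inr (ofAdd (1 : ZMod 4)) : Hgroup) ^ 4 = 1
  refine (map_pow SemidirectProduct.inr _ 4).symm.trans ?_
  rw [← ofAdd_nsmul]
  rw [show (4 : ℕ) • (1 : ZMod 4) = 0 by decide, ofAdd_zero]
  exact map_one _

lemma zpow_mem_of {G : Type*} [Group G] (M : Submonoid G) {x : G} (h : x ∈ M)
    (h' : x⁻¹ ∈ M) (a : ℤ) : x ^ a ∈ M := by
  cases a with
  | ofNat n => rw [Int.ofNat_eq_coe, zpow_natCast]; exact pow_mem h n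
  | negSucc n => rw [zpow_negSucc, ← inv_pow]; exact pow_mem h' _

lemma mem_of_gens (M : Submonoid Hgroup) (h1 : n1 ∈ M) (h1' : n1⁻¹ ∈ M)
    (h2 : n2 ∈ M) (h2' : n2⁻¹ ∈ M) (hs : sgen ∈ M) (g : Hgroup) : g ∈ M := by
  rw [← SemidirectProduct.inl_left_mul_inr_right g]
  refine mul_mem ?_ ?_
  · have hg : g.left = ofAdd (toAdd g.left) := rfl
    rw [hg]
    obtain ⟨a, b⟩ := toAdd g.left
    have : (inl (ofAdd ((a, b) : ℤ × ℤ)) : Hgroup) = n1 ^ a * n2 ^ b := by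
      rw [show ((a, b) : ℤ × ℤ) = a • ((1,0) : ℤ×ℤ) + b • ((0,1) : ℤ×ℤ) by
        simp [Prod.ext_iff], ofAdd_add, ofAdd_zsmul, ofAdd_zsmul, map_mul,
        map_zpow, map_zpow]
      rfl
    rw [this]
    exact mul_mem (zpow_mem_of M h1 h1' a) (zpow_mem_of M h2 h2' b)
  · have hval : (toAdd g.right).val • (1 : ZMod 4) = toAdd g.right := by
      simp [nsmul_eq_mul, ZMod.natCast_val, ZMod.cast_id]
    have : sgen ^ ((toAdd g.right).val) = inr g.right := by
      exact (map_pow SemidirectProduct.inr (ofAdd (1 : ZMod 4)) _).symm.trans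
        (congrArg inr (by rw [← ofAdd_nsmul, hval, ofAdd_toAdd]))
    rw [← this]
    exact pow_mem hs _

end HgrpAux
section RepAux

open HgrpAux

variable {W : Type} [NormedAddCommGroup W] [InnerProductSpace ℂ W] [FiniteDimensional ℂ W]
variable (ρ : Hgroup →* (W ≃ₗᵢ[ℂ] W))

lemma rho_mul (g h : Hgroup) (x : W) : ρ (g * h) x = ρ g (ρ h x) := by
  rw [map_mul]; rfl

lemma rho_one (x : W) : ρ (1 : Hgroup) x = x := by rw [map_one]; rfl

/-- Joint eigenvector property for the two translations. -/
def Eig (l m : ℂ) (x : W) : Prop := ρ n1 x = l • x ∧ ρ n2 x = m • x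

lemma rho_ne_zero {g : Hgroup} {x : W} (hx : x ≠ 0) : ρ g x ≠ 0 := fun h =>
  hx ((ρ g).map_eq_zero_iff.mp h)

lemma eig_ne_zero {g : Hgroup} {c : ℂ} {x : W} (hx : x ≠ 0) (h : ρ g x = c • x) :
    c ≠ 0 := by
  rintro rfl
  rw [zero_smul] at h
  exact rho_ne_zero ρ hx h

lemma eig_inv {g : Hgroup} {c : ℂ} {x : W} (hc : c ≠ 0) (h : ρ g x = c • x) :
    ρ g⁻¹ x = c⁻¹ • x := by
  have h2 : x = c • ρ g⁻¹ x := by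
    have h3 := congrArg (ρ g⁻¹) h
    rwa [← rho_mul ρ, inv_mul_cancel, rho_one ρ, map_smul] at h3
  calc ρ g⁻¹ x = c⁻¹ • (c • ρ g⁻¹ x) := by rw [smul_smul, inv_mul_cancel₀ hc, one_smul]
    _ = c⁻¹ • x := by rw [← h2]

lemma eig_S {l m : ℂ} {x : W} (h : Eig ρ l m x) (hm : m ≠ 0) :
    Eig ρ m⁻¹ l (ρ sgen x) := by
  constructor
  · rw [← rho_mul ρ, n1s, rho_mul ρ, eig_inv ρ hm h.2, map_smul]
  · rw [← rho_mul ρ, n2s, rho_mul ρ, h.1, map_smul]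

/-- The submonoid of elements whose action maps `p` into `p`. -/
def invMonoid (p : Submodule ℂ W) : Submonoid Hgroup where
  carrier := {g | Submodule.map ((ρ g).toLinearEquiv : W →ₗ[ℂ] W) p ≤ p}
  one_mem' := by
    have h : (((ρ (1 : Hgroup)).toLinearEquiv : W ≃ₗ[ℂ] W) : W →ₗ[ℂ] W) = LinearMap.id := by
      ext x; exact rho_one ρ x
    simp only [Set.mem_setOf_eq, h, Submodule.map_id]
    exact le_rfl
  mul_mem' := by
    intro a b ha hb
    simp only [Set.mem_setOf_eq] at *
    have h : (((ρ (a * b)).toLinearEquiv : W ≃ₗ[ℂ] W) : W →ₗ[ℂ] W)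
        = (((ρ a).toLinearEquiv : W ≃ₗ[ℂ] W) : W →ₗ[ℂ] W)
          ∘ₗ (((ρ b).toLinearEquiv : W ≃ₗ[ℂ] W) : W →ₗ[ℂ] W) := by
      ext x; exact rho_mul ρ a b x
    rw [h, Submodule.map_comp]
    exact le_trans (Submodule.map_mono hb) ha

lemma mem_invMonoid_of_span {s : Set W} {g : Hgroup}
    (h : ∀ x ∈ s, ρ g x ∈ Submodule.span ℂ s) :
    g ∈ invMonoid ρ (Submodule.span ℂ s) := by
  show Submodule.map _ _ ≤ _
  rw [Submodule.map_span_le]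
  intro m hm
  simpa using h m hm

end RepAux

section Sep

lemma exists_sep {ι : Type} [Finite ι] (c : ι → ℂ × ℂ) (hinj : Function.Injective c) :
    ∃ t : ℂ, Function.Injective (fun i => (c i).1 + t * (c i).2) := by
  by_contra h
  push_neg at h
  have h' : ∀ t : ℂ, ∃ ij : ι × ι, ij.1 ≠ ij.2 ∧
      (c ij.1).1 + t * (c ij.1).2 = (c ij.2).1 + t * (c ij.2).2 := by
    intro t
    obtain ⟨a, b, heq, hne⟩ := Function.not_injective_iff.mp (h t)
    exact ⟨(a, b), hne, heq⟩
  choose F hF1 hF2 using h'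
  obtain ⟨t1, t2, hne, hFe⟩ := Finite.exists_ne_map_eq_of_infinite F
  have e1 := hF2 t1
  have e2 := hF2 t2
  rw [← hFe] at e2
  have h2 : (c (F t1).1).2 = (c (F t1).2).2 := by
    have hsub : (t1 - t2) * ((c (F t1).1).2 - (c (F t1).2).2) = 0 := by
      linear_combination e1 - e2
    rcases mul_eq_zero.mp hsub with h | h
    · exact absurd (sub_eq_zero.mp h) hne
    · exact sub_eq_zero.mp h
  have h1 : (c (F t1).1).1 = (c (F t1).2).1 := by linear_combination e1 - t1 * h2
  exact hF1 t1 (hinj (Prod.ext h1 h2))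

lemma char_inj {l m : ℂ} (h : ¬(l⁻¹ = l ∧ m⁻¹ = m)) :
    Function.Injective ![((l, m) : ℂ × ℂ), (m⁻¹, l), (l⁻¹, m⁻¹), (m, l⁻¹)] := by
  intro i j
  fin_cases i <;> fin_cases j <;> intro hij <;> try rfl
  all_goals simp at hij
  all_goals exact absurd ⟨by grind, by grind⟩ h

end Sep

open HgrpAux

/-- Every irreducible unitary representation of `H = ℤ² ⋊ ℤ/4` on a nonzero
finite-dimensional complex inner product space has dimension `1`, `2`, or `4`. -/
theorem Hgroup_irreducible_dim (W : Type)
    [NormedAddCommGroup W] [InnerProductSpace ℂ W] [FiniteDimensional ℂ W]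
    (ρ : Hgroup →* (W ≃ₗᵢ[ℂ] W))
    (hW : 0 < Module.finrank ℂ W)
    (hirr : ∀ p : Submodule ℂ W,
        (∀ g : Hgroup, p.map ((ρ g).toLinearEquiv : W →ₗ[ℂ] W) ≤ p) →
          p = ⊥ ∨ p = ⊤) :
    Module.finrank ℂ W = 1 ∨ Module.finrank ℂ W = 2 ∨ Module.finrank ℂ W = 4 := by
  classical
  haveI : Nontrivial W := Module.finrank_pos_iff.mp hW
  set Ta : Module.End ℂ W := (((ρ n1).toLinearEquiv : W ≃ₗ[ℂ] W) : W →ₗ[ℂ] W) with hTadef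
  set Tb : Module.End ℂ W := (((ρ n2).toLinearEquiv : W ≃ₗ[ℂ] W) : W →ₗ[ℂ] W) with hTbdef
  obtain ⟨l, hl⟩ := Module.End.exists_eigenvalue Ta
  haveI : Nontrivial (Ta.eigenspace l) := Submodule.nontrivial_iff_ne_bot.mpr hl
  have hBE : ∀ x ∈ Ta.eigenspace l, Tb x ∈ Ta.eigenspace l := by
    intro x hx
    rw [Module.End.mem_eigenspace_iff] at hx ⊢
    have hcomm : Ta (Tb x) = Tb (Ta x) := by
      show ρ n1 (ρ n2 x) = ρ n2 (ρ n1 x)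
      rw [← rho_mul ρ, ← rho_mul ρ, n1n2]
    rw [hcomm, hx, map_smul]
  obtain ⟨m, hm⟩ := Module.End.exists_eigenvalue (Tb.restrict hBE)
  obtain ⟨w, hw⟩ := hm.exists_hasEigenvector
  set v : W := (w : W) with hvdef
  have hv0 : v ≠ 0 := fun h0 => hw.2 (ZeroMemClass.coe_eq_zero.mp h0)
  have hAv : ρ n1 v = l • v := Module.End.mem_eigenspace_iff.mp w.2
  have hBv : ρ n2 v = m • v := by
    have h1 := congrArg Subtype.val (Module.End.mem_eigenspace_iff.mp hw.1)
    rw [LinearMap.restrict_coe_apply] at h1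
    exact h1
  have hl0 : l ≠ 0 := eig_ne_zero ρ hv0 hAv
  have hm0 : m ≠ 0 := eig_ne_zero ρ hv0 hBv
  have e0 : Eig ρ l m v := ⟨hAv, hBv⟩
  by_cases hc2 : l⁻¹ = l ∧ m⁻¹ = m
  · -- s² fixes the character: dimension ≤ 2
    set E2 : Submodule ℂ W := (Ta.eigenspace l) ⊓ (Tb.eigenspace m) with hE2def
    have hmemE2 : ∀ x : W, x ∈ E2 ↔ Eig ρ l m x := by
      intro x
      rw [hE2def, Submodule.mem_inf, Module.End.mem_eigenspace_iff,
        Module.End.mem_eigenspace_iff]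
      exact Iff.rfl
    have hvE2 : v ∈ E2 := (hmemE2 v).mpr e0
    haveI : Nontrivial E2 :=
      ⟨⟨⟨v, hvE2⟩, 0, fun hcon => hv0 (by simpa [Subtype.ext_iff] using hcon)⟩⟩
    set Ts2 : Module.End ℂ W :=
      (((ρ (sgen * sgen)).toLinearEquiv : W ≃ₗ[ℂ] W) : W →ₗ[ℂ] W) with hTs2def
    have hSE2 : ∀ x ∈ E2, Ts2 x ∈ E2 := by
      intro x hx
      have ex : Eig ρ l m x := (hmemE2 x).mp hx
      have e2 := eig_S ρ (eig_S ρ ex hm0) hl0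
      rw [hc2.1, hc2.2] at e2
      have hx2 : Ts2 x = ρ sgen (ρ sgen x) := rho_mul ρ sgen sgen x
      rw [hmemE2, hx2]
      exact e2
    obtain ⟨c, hc⟩ := Module.End.exists_eigenvalue (Ts2.restrict hSE2)
    obtain ⟨u0, hu0⟩ := hc.exists_hasEigenvector
    set u : W := (u0 : W) with hudef
    have hune : u ≠ 0 := fun h0 => hu0.2 (ZeroMemClass.coe_eq_zero.mp h0)
    have hEu : Eig ρ l m u := (hmemE2 u).mp u0.2
    have hS2u : ρ sgen (ρ sgen u) = c • u := by
      have h1 := congrArg Subtype.val (Module.End.mem_eigenspace_iff.mp hu0.1)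
      rw [LinearMap.restrict_coe_apply] at h1
      rw [← rho_mul ρ]
      exact h1
    have e1 := eig_S ρ hEu hm0
    set vs : Fin 2 → W := ![u, ρ sgen u] with hvs
    set p := Submodule.span ℂ (Set.range vs) with hp
    have hup : u ∈ p := Submodule.subset_span ⟨0, rfl⟩
    have hsup : ρ sgen u ∈ p := Submodule.subset_span ⟨1, rfl⟩
    have hmem : ∀ g : Hgroup, g ∈ invMonoid ρ p := by
      intro g
      refine mem_of_gens _ ?_ ?_ ?_ ?_ ?_ g <;>
        (rw [hp]; apply mem_invMonoid_of_span ρ; intro x hx; obtain ⟨i, rfl⟩ := hx;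
          fin_cases i)
      · show ρ n1 u ∈ p
        rw [hEu.1]; exact Submodule.smul_mem _ _ hup
      · show ρ n1 (ρ sgen u) ∈ p
        rw [e1.1]; exact Submodule.smul_mem _ _ hsup
      · show ρ n1⁻¹ u ∈ p
        rw [eig_inv ρ hl0 hEu.1]; exact Submodule.smul_mem _ _ hup
      · show ρ n1⁻¹ (ρ sgen u) ∈ p
        rw [eig_inv ρ (inv_ne_zero hm0) e1.1]; exact Submodule.smul_mem _ _ hsup
      · show ρ n2 u ∈ p
        rw [hEu.2]; exact Submodule.smul_mem _ _ hup
      · show ρ n2 (ρ sgen u) ∈ p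
        rw [e1.2]; exact Submodule.smul_mem _ _ hsup
      · show ρ n2⁻¹ u ∈ p
        rw [eig_inv ρ hm0 hEu.2]; exact Submodule.smul_mem _ _ hup
      · show ρ n2⁻¹ (ρ sgen u) ∈ p
        rw [eig_inv ρ hl0 e1.2]; exact Submodule.smul_mem _ _ hsup
      · show ρ sgen u ∈ p
        exact hsup
      · show ρ sgen (ρ sgen u) ∈ p
        rw [hS2u]; exact Submodule.smul_mem _ _ hup
    rcases hirr p (fun g => hmem g) with hbot | htop
    · rw [hbot] at hup
      rw [Submodule.mem_bot] at hup
      exact absurd hup hune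
    · have hle : Module.finrank ℂ W ≤ 2 := by
        have h2 := finrank_le_of_span_eq_top (v := vs) (by rw [← hp]; exact htop)
        simpa using h2
      omega
  · -- s² moves the character: dimension = 4
    have e1 := eig_S ρ e0 hm0
    have e2 := eig_S ρ e1 hl0
    have e3 := eig_S ρ e2 (inv_ne_zero hm0)
    rw [inv_inv] at e3
    set vs : Fin 4 → W :=
      ![v, ρ sgen v, ρ sgen (ρ sgen v), ρ sgen (ρ sgen (ρ sgen v))] with hvs
    set p := Submodule.span ℂ (Set.range vs) with hp
    have h0p : v ∈ p := Submodule.subset_span ⟨0, rfl⟩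
    have h1p : ρ sgen v ∈ p := Submodule.subset_span ⟨1, rfl⟩
    have h2p : ρ sgen (ρ sgen v) ∈ p := Submodule.subset_span ⟨2, rfl⟩
    have h3p : ρ sgen (ρ sgen (ρ sgen v)) ∈ p := Submodule.subset_span ⟨3, rfl⟩
    have hS4 : ρ sgen (ρ sgen (ρ sgen (ρ sgen v))) = v := by
      rw [← rho_mul ρ, ← rho_mul ρ, ← rho_mul ρ]
      rw [show sgen * sgen * sgen * sgen = (1 : Hgroup) by rw [← s4, pow_succ, pow_succ, pow_succ, pow_one]]
      exact rho_one ρ v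
    have hmem : ∀ g : Hgroup, g ∈ invMonoid ρ p := by
      intro g
      refine mem_of_gens _ ?_ ?_ ?_ ?_ ?_ g <;>
        (rw [hp]; apply mem_invMonoid_of_span ρ; intro x hx; obtain ⟨i, rfl⟩ := hx;
          fin_cases i)
      · show ρ n1 v ∈ p
        rw [e0.1]; exact Submodule.smul_mem _ _ h0p
      · show ρ n1 (ρ sgen v) ∈ p
        rw [e1.1]; exact Submodule.smul_mem _ _ h1p
      · show ρ n1 (ρ sgen (ρ sgen v)) ∈ p
        rw [e2.1]; exact Submodule.smul_mem _ _ h2p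
      · show ρ n1 (ρ sgen (ρ sgen (ρ sgen v))) ∈ p
        rw [e3.1]; exact Submodule.smul_mem _ _ h3p
      · show ρ n1⁻¹ v ∈ p
        rw [eig_inv ρ hl0 e0.1]; exact Submodule.smul_mem _ _ h0p
      · show ρ n1⁻¹ (ρ sgen v) ∈ p
        rw [eig_inv ρ (inv_ne_zero hm0) e1.1]; exact Submodule.smul_mem _ _ h1p
      · show ρ n1⁻¹ (ρ sgen (ρ sgen v)) ∈ p
        rw [eig_inv ρ (inv_ne_zero hl0) e2.1]; exact Submodule.smul_mem _ _ h2p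
      · show ρ n1⁻¹ (ρ sgen (ρ sgen (ρ sgen v))) ∈ p
        rw [eig_inv ρ hm0 e3.1]; exact Submodule.smul_mem _ _ h3p
      · show ρ n2 v ∈ p
        rw [e0.2]; exact Submodule.smul_mem _ _ h0p
      · show ρ n2 (ρ sgen v) ∈ p
        rw [e1.2]; exact Submodule.smul_mem _ _ h1p
      · show ρ n2 (ρ sgen (ρ sgen v)) ∈ p
        rw [e2.2]; exact Submodule.smul_mem _ _ h2p
      · show ρ n2 (ρ sgen (ρ sgen (ρ sgen v))) ∈ p
        rw [e3.2]; exact Submodule.smul_mem _ _ h3p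
      · show ρ n2⁻¹ v ∈ p
        rw [eig_inv ρ hm0 e0.2]; exact Submodule.smul_mem _ _ h0p
      · show ρ n2⁻¹ (ρ sgen v) ∈ p
        rw [eig_inv ρ hl0 e1.2]; exact Submodule.smul_mem _ _ h1p
      · show ρ n2⁻¹ (ρ sgen (ρ sgen v)) ∈ p
        rw [eig_inv ρ (inv_ne_zero hm0) e2.2]; exact Submodule.smul_mem _ _ h2p
      · show ρ n2⁻¹ (ρ sgen (ρ sgen (ρ sgen v))) ∈ p
        rw [eig_inv ρ (inv_ne_zero hl0) e3.2]; exact Submodule.smul_mem _ _ h3p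
      · show ρ sgen v ∈ p
        exact h1p
      · show ρ sgen (ρ sgen v) ∈ p
        exact h2p
      · show ρ sgen (ρ sgen (ρ sgen v)) ∈ p
        exact h3p
      · show ρ sgen (ρ sgen (ρ sgen (ρ sgen v))) ∈ p
        rw [hS4]; exact h0p
    rcases hirr p (fun g => hmem g) with hbot | htop
    · rw [hbot] at h0p
      rw [Submodule.mem_bot] at h0p
      exact absurd h0p hv0
    · have hle : Module.finrank ℂ W ≤ 4 := by
        have h4 := finrank_le_of_span_eq_top (v := vs) (by rw [← hp]; exact htop)
        simpa using h4
      set chars : Fin 4 → ℂ × ℂ := ![(l, m), (m⁻¹, l), (l⁻¹, m⁻¹), (m, l⁻¹)] with hchars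
      obtain ⟨t, ht⟩ := exists_sep chars (char_inj hc2)
      set P : Module.End ℂ W := Ta + t • Tb with hPdef
      have hEi : ∀ i : Fin 4, Eig ρ (chars i).1 (chars i).2 (vs i) := by
        intro i
        fin_cases i <;>
          simp only [hchars, hvs, Matrix.cons_val_zero, Matrix.cons_val_one, Matrix.head_cons,
            Matrix.cons_val_two, Matrix.tail_cons, Matrix.cons_val_three]
        · exact e0
        · exact e1
        · exact e2
        · exact e3
      have hne : ∀ i : Fin 4, vs i ≠ 0 := by
        intro i
        fin_cases i <;>
          simp only [hvs, Matrix.cons_val_zero, Matrix.cons_val_one, Matrix.head_cons,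
            Matrix.cons_val_two, Matrix.tail_cons, Matrix.cons_val_three]
        · exact hv0
        · exact rho_ne_zero ρ hv0
        · exact rho_ne_zero ρ (rho_ne_zero ρ hv0)
        · exact rho_ne_zero ρ (rho_ne_zero ρ (rho_ne_zero ρ hv0))
      have hPe : ∀ i : Fin 4,
          P.HasEigenvector ((chars i).1 + t * (chars i).2) (vs i) := by
        intro i
        constructor
        · rw [Module.End.mem_eigenspace_iff, hPdef, LinearMap.add_apply, LinearMap.smul_apply]
          have hx := hEi i
          show ρ n1 (vs i) + t • ρ n2 (vs i) = _
          rw [hx.1, hx.2, smul_smul, ← add_smul]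
        · exact hne i
      have hlin := Module.End.eigenvectors_linearIndependent' P
        (fun i => (chars i).1 + t * (chars i).2) ht vs hPe
      have hge := hlin.fintype_card_le_finrank
      simp only [Fintype.card_fin] at hge
      omega
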